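/- For every n ≥ 3, the code B_n of Construction 9 is a complete cyclic ternary 1-skew-tolerant Gray code of length n: it lists all 3^n vectors of (Z/3)^n, cyclically consecutive codewords differ by ±1 (mod 3) in exactly one coordinate, and cyclically consecutive transition positions differ by at most 1. -/

import Mathlib

/-- Codewords `c` and `d` differ exactly at coordinate `i` (1-based), by `±1` there. -/
def TransAt {m : ℕ} (c d : List (ZMod m)) (i : ℕ) : Prop :=
  1 ≤ i ∧ i ≤ c.length ∧ c.length = d.length ∧
  c.take (i-1) = d.take (i-1) ∧ c.drop i = d.drop i ∧
  (d.getD (i-1) 0 = c.getD (i-1) 0 + 1 ∨ d.getD (i-1) 0 = c.getD (i-1) 0 - 1)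

/-- `C` is a cyclic Gray code with transition sequence `δ`. -/
def CyclicGrayWith {m : ℕ} (C : List (List (ZMod m))) (δ : ℕ → ℕ) : Prop :=
  C.Nodup ∧ ∀ i < C.length,
    TransAt (C.getD i []) (C.getD ((i+1) % C.length) []) (δ i)

/-- `C` is a non-cyclic (path) Gray code with transition sequence `δ`. -/
def PathGrayWith {m : ℕ} (C : List (List (ZMod m))) (δ : ℕ → ℕ) : Prop :=
  C.Nodup ∧ ∀ i, i + 1 < C.length →
    TransAt (C.getD i []) (C.getD (i+1) []) (δ i)

/-- cyclic `k`-skew-tolerance. -/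
def SkewCyc (P : ℕ) (δ : ℕ → ℕ) (k : ℤ) : Prop :=
  ∀ i < P, |(δ i : ℤ) - (δ ((i+1) % P) : ℤ)| ≤ k

/-- non-cyclic `k`-skew-tolerance. -/
def SkewPath (P : ℕ) (δ : ℕ → ℕ) (k : ℤ) : Prop :=
  ∀ i, i + 2 < P → |(δ i : ℤ) - (δ (i+1) : ℤ)| ≤ k

/-- Construction 8, ternary codes `A_n` (`n ≥ 2`). -/
def t8A : ℕ → List (List (ZMod 3))
  | 0 => [] | 1 => []
  | 2 => [[0,0],[0,1],[0,2],[2,2],[2,0],[2,1],[1,1],[1,2],[1,0]]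
  | (n+3) =>
    let P := t8A (n+2)
    let c := P.headI
    let d := P.getLastD []
    let Q := P.tail.dropLast
    [c ++ [0], c ++ [2], c ++ [1]] ++
    Q.map (· ++ [1]) ++ Q.reverse.map (· ++ [0]) ++ Q.map (· ++ [2]) ++
    [d ++ [2], d ++ [1], d ++ [0]]

/-- Add `e_1` (over `ZMod 3`) to a codeword. -/
def addE1 : List (ZMod 3) → List (ZMod 3)
  | [] => []
  | x :: r => (x + 1) :: r

/-- Construction 9: `B_n = [A_{n-1}|0 ; (e_1 + A_{n-1})|1 ; (2e_1 + A_{n-1})|2]`. -/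
def t9B (n : ℕ) : List (List (ZMod 3)) :=
  (t8A (n-1)).map (· ++ [0]) ++
  (t8A (n-1)).map (fun c => addE1 c ++ [1]) ++
  (t8A (n-1)).map (fun c => addE1 (addE1 c) ++ [2])

lemma transAt_addE1 {c d : List (ZMod 3)} {i : ℕ} (h : TransAt c d i) :
    TransAt (addE1 c) (addE1 d) i := by
  obtain ⟨h1, h2, h3, h4, h5, h6⟩ := h
  match c, d with
  | [], _ => simp at h2; omega
  | _ :: _, [] => simp at h3
  | x :: r, y :: s =>
    rcases Nat.eq_or_lt_of_le h1 with h1' | h1'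
    · subst h1'
      simp only [addE1]
      refine ⟨le_refl _, by simpa using h2, by simpa using h3, by simp, by simpa using h5, ?_⟩
      simp only [Nat.sub_self, List.getD_cons_zero] at h6 ⊢
      rcases h6 with h | h
      · left; rw [h]
      · right; rw [h]; ring
    · obtain ⟨j, rfl⟩ : ∃ j, i = j + 2 := ⟨i - 2, by omega⟩
      have h4' : List.take (j+1) (x :: r) = List.take (j+1) (y :: s) := h4
      simp only [List.take_succ_cons, List.cons.injEq] at h4'
      obtain ⟨rfl, h4''⟩ := h4'
      simp only [addE1]
      refine ⟨h1, by simpa using h2, by simpa using h3, ?_, by simpa using h5, ?_⟩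
      · show List.take (j+1) _ = List.take (j+1) _
        simp [h4'']
      · exact h6

lemma addE1_length (c : List (ZMod 3)) : (addE1 c).length = c.length := by
  cases c <;> simp [addE1]

lemma addE1_addE1_addE1 (c : List (ZMod 3)) : addE1 (addE1 (addE1 c)) = c := by
  cases c with
  | nil => rfl
  | cons x r =>
    simp only [addE1]
    congr 1
    have h3 : (3 : ZMod 3) = 0 := rfl
    calc x + 1 + 1 + 1 = x + 3 := by ring
    _ = x := by rw [h3, add_zero]

lemma addE1_injective : Function.Injective addE1 := by
  intro a b h
  have := congrArg (addE1 ∘ addE1) h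
  simpa [addE1_addE1_addE1] using this

instance {m : ℕ} (c d : List (ZMod m)) (i : ℕ) : Decidable (TransAt c d i) := by
  unfold TransAt; infer_instance

lemma TransAt.symm {m : ℕ} {c d : List (ZMod m)} {i : ℕ} (h : TransAt c d i) :
    TransAt d c i := by
  obtain ⟨h1, h2, h3, h4, h5, h6⟩ := h
  refine ⟨h1, h3 ▸ h2, h3.symm, h4.symm, h5.symm, ?_⟩
  rcases h6 with h | h
  · right; rw [h]; ring
  · left; rw [h]; ring

lemma transAt_append {m : ℕ} {c d : List (ZMod m)} {i : ℕ} (h : TransAt c d i)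
    (x : ZMod m) : TransAt (c ++ [x]) (d ++ [x]) i := by
  obtain ⟨h1, h2, h3, h4, h5, h6⟩ := h
  refine ⟨h1, by simp; omega, by simp [h3], ?_, ?_, ?_⟩
  · rw [List.take_append_of_le_length (by omega), List.take_append_of_le_length (by omega), h4]
  · rw [List.drop_append_of_le_length (by omega), List.drop_append_of_le_length (by omega), h5]
  · rwa [List.getD_append _ _ _ _ (by omega), List.getD_append _ _ _ _ (by omega)]

lemma transAt_last {m : ℕ} (w : List (ZMod m)) {a b : ZMod m}
    (h : b = a + 1 ∨ b = a - 1) : TransAt (w ++ [a]) (w ++ [b]) (w.length + 1) := by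
  refine ⟨by omega, by simp, by simp, ?_, ?_, ?_⟩
  · simp
  · simp [List.drop_append]
  · simp only [Nat.add_sub_cancel]
    rw [List.getD_append_right _ _ _ _ (le_refl _), List.getD_append_right _ _ _ _ (le_refl _)]
    simpa using h

lemma split_list {α : Type*} [Inhabited α] (P : List α) (h : 2 ≤ P.length) (d : α) :
    P = P.headI :: (P.tail.dropLast ++ [P.getLastD d]) := by
  match P with
  | a :: b :: t =>
    simp only [List.headI, List.tail]
    congr 1
    have hne : (b :: t) ≠ [] := by simp
    have : (a :: b :: t).getLastD d = (b :: t).getLast hne := by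
      rw [List.getLastD_eq_getLast?, List.getLast?_eq_getLast (List.cons_ne_nil _ _),
        List.getLast_cons hne]
      rfl
    rw [this, List.dropLast_append_getLast hne]

lemma getD_map_append (Q : List (List (ZMod 3))) (x : ZMod 3) (j : ℕ) (h : j < Q.length) :
    (Q.map (· ++ [x])).getD j [] = Q.getD j [] ++ [x] := by
  rw [List.getD_eq_getElem _ _ (by simpa using h), List.getElem_map,
    List.getD_eq_getElem _ _ h]

lemma getD_zero_headI (l : List (List (ZMod 3))) (h : l ≠ []) : l.getD 0 [] = l.headI := by
  cases l with
  | nil => exact absurd rfl h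
  | cons a t => rfl

lemma getD_reverse (Q : List (List (ZMod 3))) (j : ℕ) (h : j < Q.length) :
    Q.reverse.getD j [] = Q.getD (Q.length - 1 - j) [] := by
  rw [List.getD_eq_getElem _ _ (by simpa using h), List.getElem_reverse,
    List.getD_eq_getElem _ _ (by omega)]

def GoodA (n : ℕ) (P : List (List (ZMod 3))) (δ : ℕ → ℕ) : Prop :=
  P.length = 3^n ∧ (∀ c ∈ P, c.length = n) ∧ P.Nodup ∧
  (∀ c : List (ZMod 3), c.length = n → c ∈ P) ∧
  (∀ i, i + 1 < P.length → TransAt (P.getD i []) (P.getD (i+1) []) (δ i)) ∧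
  SkewPath P.length δ 1 ∧
  δ 0 = n ∧ δ 1 = n ∧ δ (3^n - 3) = n ∧ δ (3^n - 2) = n ∧
  P.headI = List.replicate n 0 ∧ P.getLastD [] = 1 :: List.replicate (n-1) 0

theorem goodA : ∀ n, 2 ≤ n → ∃ δ, GoodA n (t8A n) δ := by
  intro n hn
  induction n, hn using Nat.le_induction with
  | base =>
    refine ⟨fun i => if i = 2 ∨ i = 5 then 1 else 2, ?_, ?_, ?_, ?_, ?_, ?_, ?_, ?_, ?_, ?_, ?_, ?_⟩
    · decide
    · decide
    · decide
    · have h : ∀ a b : ZMod 3, [a,b] ∈ t8A 2 := by decide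
      intro c hc
      match c, hc with
      | [a,b], _ => exact h a b
    · intro i hi
      have : i < 8 := by simp [t8A] at hi; omega
      interval_cases i <;> decide
    · intro i hi
      have : i < 7 := by simp [t8A] at hi; omega
      interval_cases i <;> norm_num
    · norm_num
    · norm_num
    · norm_num
    · norm_num
    · decide
    · decide
  | succ k hk ih =>
    obtain ⟨p, hPlen, hlen, hnd, hcompl, hT, hsp, hp0, hp1, hpl1, hpl2, hhead, hlast⟩ := ih
    obtain ⟨m, rfl⟩ : ∃ m, k = m + 2 := ⟨k - 2, by omega⟩
    clear hk
    set P := t8A (m+2) with hPdef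
    set c := P.headI with hcdef
    set d := P.getLastD [] with hddef
    set Q := P.tail.dropLast with hQdef
    set q := Q.length with hqdef
    have hL : t8A (m+3) =
        [c ++ [0], c ++ [2], c ++ [1]] ++
        Q.map (· ++ [1]) ++ Q.reverse.map (· ++ [0]) ++ Q.map (· ++ [2]) ++
        [d ++ [2], d ++ [1], d ++ [0]] := rfl
    have h9 : 9 ≤ 3^(m+2) := by
      calc (9:ℕ) = 3^2 := rfl
      _ ≤ 3^(m+2) := Nat.pow_le_pow_right (by omega) (by omega)
    have hq3 : q + 2 = 3^(m+2) := by
      have h1 : Q.length = P.length - 2 := by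
        rw [hQdef, List.length_dropLast, List.length_tail]; omega
      rw [hqdef, h1, hPlen]; omega
    have hq7 : 7 ≤ q := by omega
    have hsplit : P = c :: (Q ++ [d]) := by
      have := split_list P (by rw [hPlen]; omega) []
      rw [← hcdef, ← hddef, ← hQdef] at this
      exact this
    have hP0 : P.getD 0 [] = c := by rw [hsplit]; rfl
    have hPj : ∀ j, j < q → P.getD (j+1) [] = Q.getD j [] := by
      intro j hj
      rw [hsplit]
      simp only [List.getD_cons_succ]
      exact List.getD_append _ _ _ _ hj
    have hPl : P.getD (q+1) [] = d := by
      rw [hsplit]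
      simp only [List.getD_cons_succ]
      rw [List.getD_append_right _ _ _ _ (le_refl q)]
      simp [hqdef]
    have hT' : ∀ j, j + 1 < q + 2 → TransAt (P.getD j []) (P.getD (j+1) []) (p j) := by
      intro j hj
      exact hT j (by rw [hPlen]; omega)
    have hT0 : TransAt c (Q.getD 0 []) (p 0) := by
      have h := hT' 0 (by omega)
      rwa [hP0, hPj 0 (by omega)] at h
    have hTQ : ∀ j, j + 1 < q → TransAt (Q.getD j []) (Q.getD (j+1) []) (p (j+1)) := by
      intro j hj
      have h := hT' (j+1) (by omega)
      rwa [hPj j (by omega), hPj (j+1) (by omega)] at h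
    have hTl : TransAt (Q.getD (q-1) []) d (p q) := by
      have h := hT' q (by omega)
      have h2 := hPj (q-1) (by omega)
      rw [show q - 1 + 1 = q by omega] at h2
      rwa [h2, hPl] at h
    have hclen : c.length = m + 2 := hlen c (by rw [hsplit]; exact List.mem_cons_self)
    have hdlen : d.length = m + 2 := hlen d (by rw [hsplit]; simp)
    have hQmem : ∀ w ∈ Q, w ∈ P := by
      intro w hw; rw [hsplit]; simp [hw]
    have hQlen : ∀ j, j < q → (Q.getD j []).length = m+2 := by
      intro j hj
      apply hlen
      apply hQmem
      rw [List.getD_eq_getElem _ _ hj]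
      exact List.getElem_mem _
    have hpq1 : p (q-1) = m+2 := by
      rw [show q - 1 = 3^(m+2) - 3 by omega]; exact hpl1
    have hpq : p q = m+2 := by
      rw [show q = 3^(m+2) - 2 by omega]; exact hpl2
    have hsp' : ∀ i, i + 2 < q + 2 → |(p i : ℤ) - (p (i+1) : ℤ)| ≤ 1 := by
      intro i hi; exact hsp i (by rw [hPlen]; omega)
    have hperm : (t8A (m+3)).Perm
        (P.map (· ++ [0]) ++ P.map (· ++ [1]) ++ P.map (· ++ [2])) := by
      rw [← Multiset.coe_eq_coe, hL]
      conv_rhs => rw [hsplit]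
      simp only [List.map_cons, List.map_append, List.map_reverse]
      simp only [← Multiset.coe_add, Multiset.coe_reverse, ← Multiset.cons_coe,
        ← Multiset.singleton_add, Multiset.coe_nil]
      abel
    have hlenL : (t8A (m+3)).length = 3^(m+3) := by
      rw [hperm.length_eq]
      simp only [List.length_append, List.length_map, hPlen]
      rw [pow_succ]
      ring
    have hlenw : ∀ w ∈ t8A (m+3), w.length = m+3 := by
      intro w hw
      rw [hperm.mem_iff] at hw
      simp only [List.mem_append, List.mem_map] at hw
      rcases hw with (⟨u,hu,rfl⟩|⟨u,hu,rfl⟩)|⟨u,hu,rfl⟩ <;>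
        simp [hlen u hu]
    have hcomplL : ∀ w : List (ZMod 3), w.length = m+3 → w ∈ t8A (m+3) := by
      intro w hw
      have hne : w ≠ [] := by intro h; rw [h] at hw; simp at hw
      have hsplitw : w.dropLast ++ [w.getLast hne] = w := List.dropLast_append_getLast hne
      set u := w.dropLast with hu
      set x := w.getLast hne with hx
      have hul : u.length = m+2 := by
        rw [hu, List.length_dropLast, hw]
        omega

      have huP : u ∈ P := hcompl u hul
      rw [hperm.mem_iff]
      have hx3 : x = 0 ∨ x = 1 ∨ x = 2 := by
        have : ∀ y : ZMod 3, y = 0 ∨ y = 1 ∨ y = 2 := by decide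
        exact this x
      simp only [List.mem_append, List.mem_map]
      rcases hx3 with h|h|h
      · exact Or.inl (Or.inl ⟨u, huP, by rw [← h]; exact hsplitw⟩)
      · exact Or.inl (Or.inr ⟨u, huP, by rw [← h]; exact hsplitw⟩)
      · exact Or.inr ⟨u, huP, by rw [← h]; exact hsplitw⟩
    have hdisj : ∀ x y : ZMod 3, x ≠ y →
        (P.map (· ++ [x])).Disjoint (P.map (· ++ [y])) := by
      intro x y hxy w h1 h2
      simp only [List.mem_map] at h1 h2
      obtain ⟨u, hu, rfl⟩ := h1
      obtain ⟨v, hv, heq⟩ := h2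
      have hlen' : v.length = u.length := by rw [hlen u hu, hlen v hv]
      have := List.append_inj_right heq hlen'
      simp only [List.cons.injEq] at this
      exact hxy (this.1.symm)
    have hmapnd : ∀ x : ZMod 3, (P.map (· ++ [x])).Nodup := by
      intro x
      exact hnd.map (fun a b h => List.append_cancel_right h)
    have hndL : (t8A (m+3)).Nodup := by
      rw [hperm.nodup_iff]
      refine ((hmapnd 0).append (hmapnd 1) (hdisj 0 1 (by decide))).append (hmapnd 2) ?_
      intro w hw1 hw2
      rcases List.mem_append.1 hw1 with h | h
      · exact hdisj 0 2 (by decide) h hw2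
      · exact hdisj 1 2 (by decide) h hw2
    have hheadL : (t8A (m+3)).headI = List.replicate (m+3) 0 := by
      rw [hL]
      show c ++ [0] = _
      rw [hhead, ← List.replicate_succ']
    have hlastL : (t8A (m+3)).getLastD [] = 1 :: List.replicate (m+3-1) 0 := by
      rw [hL]
      have e : [d ++ [2], d ++ [1], d ++ [0]] = [d ++ [2], d ++ [1]] ++ [d ++ [0]] := rfl
      rw [e, ← List.append_assoc, List.getLastD_concat, hlast]
      show (1 :: List.replicate (m + 2 - 1) 0) ++ [0] = _
      rw [show m + 2 - 1 = m + 1 from rfl, show m + 3 - 1 = m + 2 from rfl,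
        List.cons_append, ← List.replicate_succ']
    have h36 : 3^(m+3) = 3*q+6 := by
      have e : 3^(m+3) = 3 * 3^(m+2) := by rw [pow_succ]; ring
      omega
    have hlen36 : (t8A (m+3)).length = 3*q+6 := by rw [hlenL, h36]
    -- getD description lemmas
    have hg0 : (t8A (m+3)).getD 0 [] = c ++ [0] := by rw [hL]; rfl
    have hg1 : (t8A (m+3)).getD 1 [] = c ++ [2] := by rw [hL]; rfl
    have hg2 : (t8A (m+3)).getD 2 [] = c ++ [1] := by rw [hL]; rfl
    have hgQ1 : ∀ j, j < q → (t8A (m+3)).getD (j+3) [] = Q.getD j [] ++ [1] := by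
      intro j hj
      rw [hL,
        List.getD_append _ _ _ _ (by
          simp only [List.length_append, List.length_map, List.length_cons,
            List.length_nil, List.length_reverse]; omega),
        List.getD_append _ _ _ _ (by
          simp only [List.length_append, List.length_map, List.length_cons,
            List.length_nil, List.length_reverse]; omega),
        List.getD_append _ _ _ _ (by
          simp only [List.length_append, List.length_map, List.length_cons,
            List.length_nil]; omega),
        List.getD_append_right _ _ _ _ (by
          simp only [List.length_cons, List.length_nil]; omega)]
      have e : j + 3 - ([c ++ [0], c ++ [2], c ++ [1]] : List (List (ZMod 3))).length = j := by
        simp only [List.length_cons, List.length_nil]; omega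
      rw [e, getD_map_append _ _ _ hj]
    have hgQ0 : ∀ j, j < q → (t8A (m+3)).getD (q+3+j) [] = Q.getD (q-1-j) [] ++ [0] := by
      intro j hj
      rw [hL,
        List.getD_append _ _ _ _ (by
          simp only [List.length_append, List.length_map, List.length_cons,
            List.length_nil, List.length_reverse]; omega),
        List.getD_append _ _ _ _ (by
          simp only [List.length_append, List.length_map, List.length_cons,
            List.length_nil, List.length_reverse]; omega),
        List.getD_append_right _ _ _ _ (by
          simp only [List.length_append, List.length_map, List.length_cons,
            List.length_nil]; omega)]
      have e : q + 3 + j - (([c ++ [0], c ++ [2], c ++ [1]] : List (List (ZMod 3))) ++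
          Q.map (· ++ [1])).length = j := by
        simp only [List.length_append, List.length_map, List.length_cons, List.length_nil]
        omega
      rw [e, getD_map_append _ _ _ (by simpa using hj), getD_reverse _ _ hj]
    have hgQ2 : ∀ j, j < q → (t8A (m+3)).getD (2*q+3+j) [] = Q.getD j [] ++ [2] := by
      intro j hj
      rw [hL,
        List.getD_append _ _ _ _ (by
          simp only [List.length_append, List.length_map, List.length_cons,
            List.length_nil, List.length_reverse]; omega),
        List.getD_append_right _ _ _ _ (by
          simp only [List.length_append, List.length_map, List.length_cons,
            List.length_nil, List.length_reverse]; omega)]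
      have e : 2*q + 3 + j - ((([c ++ [0], c ++ [2], c ++ [1]] : List (List (ZMod 3))) ++
          Q.map (· ++ [1])) ++ Q.reverse.map (· ++ [0])).length = j := by
        simp only [List.length_append, List.length_map, List.length_cons, List.length_nil,
          List.length_reverse]
        omega
      rw [e, getD_map_append _ _ _ hj]
    have hgE : ∀ t, t < 3 → (t8A (m+3)).getD (3*q+3+t) [] =
        ([d ++ [2], d ++ [1], d ++ [0]] : List (List (ZMod 3))).getD t [] := by
      intro t ht
      rw [hL,
        List.getD_append_right _ _ _ _ (by
          simp only [List.length_append, List.length_map, List.length_cons,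
            List.length_nil, List.length_reverse]; omega)]
      congr 1
      simp only [List.length_append, List.length_map, List.length_cons, List.length_nil,
        List.length_reverse]
      omega
    have hgd2 : (t8A (m+3)).getD (3*q+3) [] = d ++ [2] := by
      have := hgE 0 (by omega); simpa using this
    have hgd1 : (t8A (m+3)).getD (3*q+4) [] = d ++ [1] := by
      have := hgE 1 (by omega)
      rw [show 3*q+3+1 = 3*q+4 by omega] at this
      simpa using this
    have hgd0 : (t8A (m+3)).getD (3*q+5) [] = d ++ [0] := by
      have := hgE 2 (by omega)
      rw [show 3*q+3+2 = 3*q+5 by omega] at this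
      simpa using this
    set δn : ℕ → ℕ := fun i =>
      if i ≤ 1 then m+3
      else if i ≤ q+1 then p (i-2)
      else if i = q+2 then m+3
      else if i ≤ 2*q+1 then p (2*q+2-i)
      else if i = 2*q+2 then m+3
      else if i ≤ 3*q+1 then p (i-2*q-2)
      else if i = 3*q+2 then p q
      else m+3 with hδn
    have hδ0 : ∀ i, i ≤ 1 → δn i = m+3 := by
      intro i h; simp only [hδn]; rw [if_pos h]
    have hδQ1 : ∀ i, 2 ≤ i → i ≤ q+1 → δn i = p (i-2) := by
      intro i h1 h2; simp only [hδn]; rw [if_neg (by omega), if_pos h2]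
    have hδq2 : δn (q+2) = m+3 := by
      simp only [hδn]; rw [if_neg (by omega), if_neg (by omega), if_pos trivial]
    have hδQ0 : ∀ i, q+3 ≤ i → i ≤ 2*q+1 → δn i = p (2*q+2-i) := by
      intro i h1 h2; simp only [hδn]
      rw [if_neg (by omega), if_neg (by omega), if_neg (by omega), if_pos h2]
    have hδ2q2 : δn (2*q+2) = m+3 := by
      simp only [hδn]
      rw [if_neg (by omega), if_neg (by omega), if_neg (by omega), if_neg (by omega), if_pos trivial]
    have hδQ2 : ∀ i, 2*q+3 ≤ i → i ≤ 3*q+1 → δn i = p (i-2*q-2) := by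
      intro i h1 h2; simp only [hδn]
      rw [if_neg (by omega), if_neg (by omega), if_neg (by omega), if_neg (by omega),
        if_neg (by omega), if_pos h2]
    have hδ3q2 : δn (3*q+2) = p q := by
      simp only [hδn]
      rw [if_neg (by omega), if_neg (by omega), if_neg (by omega), if_neg (by omega),
        if_neg (by omega), if_neg (by omega), if_pos trivial]
    have hδtop : ∀ i, 3*q+3 ≤ i → δn i = m+3 := by
      intro i h; simp only [hδn]
      rw [if_neg (by omega), if_neg (by omega), if_neg (by omega), if_neg (by omega),
        if_neg (by omega), if_neg (by omega), if_neg (by omega)]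
    have hTnew : ∀ i, i + 1 < 3*q+6 →
        TransAt ((t8A (m+3)).getD i []) ((t8A (m+3)).getD (i+1) []) (δn i) := by
      intro i hi
      rcases (by omega : i = 0 ∨ i = 1 ∨ i = 2 ∨ (3 ≤ i ∧ i ≤ q+1) ∨ i = q+2 ∨
          (q+3 ≤ i ∧ i ≤ 2*q+1) ∨ i = 2*q+2 ∨ (2*q+3 ≤ i ∧ i ≤ 3*q+1) ∨ i = 3*q+2 ∨
          i = 3*q+3 ∨ i = 3*q+4) with
        rfl | rfl | rfl | ⟨ha,hb⟩ | rfl | ⟨ha,hb⟩ | rfl | ⟨ha,hb⟩ | rfl | rfl | rfl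
      · rw [hg0, hg1, hδ0 0 (by omega)]
        have h := transAt_last c (show (2:ZMod 3) = 0 + 1 ∨ (2:ZMod 3) = 0 - 1 by decide)
        rwa [hclen, show m+2+1 = m+3 by omega] at h
      · rw [hg1, hg2, hδ0 1 (by omega)]
        have h := transAt_last c (show (1:ZMod 3) = 2 + 1 ∨ (1:ZMod 3) = 2 - 1 by decide)
        rwa [hclen, show m+2+1 = m+3 by omega] at h
      · rw [hg2, show (2:ℕ)+1 = 0+3 by omega, hgQ1 0 (by omega),
          hδQ1 2 (by omega) (by omega), show (2:ℕ)-2 = 0 by omega]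
        exact transAt_append hT0 1
      · obtain ⟨j, rfl⟩ : ∃ j, i = j + 3 := ⟨i - 3, by omega⟩
        rw [hgQ1 j (by omega), show j+3+1 = (j+1)+3 by omega, hgQ1 (j+1) (by omega),
          hδQ1 (j+3) (by omega) (by omega), show j+3-2 = j+1 by omega]
        exact transAt_append (hTQ j (by omega)) 1
      · rw [show q+2 = (q-1)+3 by omega, hgQ1 (q-1) (by omega),
          show (q-1)+3+1 = q+3+0 by omega, hgQ0 0 (by omega),
          show q-1-0 = q-1 by omega, show (q-1)+3 = q+2 by omega, hδq2]
        have h := transAt_last (Q.getD (q-1) [])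
          (show (0:ZMod 3) = 1 + 1 ∨ (0:ZMod 3) = 1 - 1 by decide)
        rwa [hQlen (q-1) (by omega), show m+2+1 = m+3 by omega] at h
      · obtain ⟨j, rfl⟩ : ∃ j, i = q + 3 + j := ⟨i - (q+3), by omega⟩
        rw [hgQ0 j (by omega), show q+3+j+1 = q+3+(j+1) by omega, hgQ0 (j+1) (by omega),
          hδQ0 (q+3+j) (by omega) (by omega)]
        have h := transAt_append ((hTQ (q-2-j) (by omega)).symm) (0 : ZMod 3)
        rw [show q-1-(j+1) = q-2-j by omega, show 2*q+2-(q+3+j) = q-2-j+1 by omega,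
          show q-1-j = q-2-j+1 by omega]
        exact h
      · rw [show 2*q+2 = q+3+(q-1) by omega, hgQ0 (q-1) (by omega),
          show q+3+(q-1)+1 = 2*q+3+0 by omega, hgQ2 0 (by omega),
          show q-1-(q-1) = 0 by omega, show q+3+(q-1) = 2*q+2 by omega, hδ2q2]
        have h := transAt_last (Q.getD 0 [])
          (show (2:ZMod 3) = 0 + 1 ∨ (2:ZMod 3) = 0 - 1 by decide)
        rwa [hQlen 0 (by omega), show m+2+1 = m+3 by omega] at h
      · obtain ⟨j, rfl⟩ : ∃ j, i = 2*q + 3 + j := ⟨i - (2*q+3), by omega⟩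
        rw [hgQ2 j (by omega), show 2*q+3+j+1 = 2*q+3+(j+1) by omega, hgQ2 (j+1) (by omega),
          hδQ2 (2*q+3+j) (by omega) (by omega), show 2*q+3+j-2*q-2 = j+1 by omega]
        exact transAt_append (hTQ j (by omega)) 2
      · rw [show 3*q+2 = 2*q+3+(q-1) by omega, hgQ2 (q-1) (by omega),
          show 2*q+3+(q-1)+1 = 3*q+3 by omega, hgd2,
          show 2*q+3+(q-1) = 3*q+2 by omega, hδ3q2]
        exact transAt_append hTl 2
      · rw [hgd2, show 3*q+3+1 = 3*q+4 by omega, hgd1, hδtop (3*q+3) (by omega)]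
        have h := transAt_last d (show (1:ZMod 3) = 2 + 1 ∨ (1:ZMod 3) = 2 - 1 by decide)
        rwa [hdlen, show m+2+1 = m+3 by omega] at h
      · rw [hgd1, show 3*q+4+1 = 3*q+5 by omega, hgd0, hδtop (3*q+4) (by omega)]
        have h := transAt_last d (show (0:ZMod 3) = 1 + 1 ∨ (0:ZMod 3) = 1 - 1 by decide)
        rwa [hdlen, show m+2+1 = m+3 by omega] at h
    have habs : ∀ a b : ℕ, (a = b ∨ a + 1 = b ∨ b + 1 = a) → |(a:ℤ) - (b:ℤ)| ≤ 1 := by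
      intro a b h; rw [abs_le]; omega
    have hskew : ∀ i, i + 2 < 3*q+6 → |(δn i : ℤ) - (δn (i+1) : ℤ)| ≤ 1 := by
      intro i hi
      rcases (by omega : i = 0 ∨ i = 1 ∨ (2 ≤ i ∧ i ≤ q) ∨ i = q+1 ∨ i = q+2 ∨
          (q+3 ≤ i ∧ i ≤ 2*q) ∨ i = 2*q+1 ∨ i = 2*q+2 ∨ (2*q+3 ≤ i ∧ i ≤ 3*q) ∨
          i = 3*q+1 ∨ i = 3*q+2 ∨ i = 3*q+3) with
        rfl | rfl | ⟨ha,hb⟩ | rfl | rfl | ⟨ha,hb⟩ | rfl | rfl | ⟨ha,hb⟩ | rfl | rfl | rfl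
      · rw [hδ0 0 (by omega), hδ0 1 (by omega)]; exact habs _ _ (by omega)
      · rw [hδ0 1 (by omega), hδQ1 2 (by omega) (by omega), show (2:ℕ)-2 = 0 by omega, hp0]
        exact habs _ _ (by omega)
      · rw [hδQ1 i (by omega) (by omega), hδQ1 (i+1) (by omega) (by omega),
          show i+1-2 = (i-2)+1 by omega]
        exact hsp' (i-2) (by omega)
      · rw [hδQ1 (q+1) (by omega) (by omega), show q+1-2 = q-1 by omega, hpq1,
          show q+1+1 = q+2 by omega, hδq2]
        exact habs _ _ (by omega)
      · rw [hδq2, show q+2+1 = q+3 by omega, hδQ0 (q+3) (by omega) (by omega),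
          show 2*q+2-(q+3) = q-1 by omega, hpq1]
        exact habs _ _ (by omega)
      · rw [hδQ0 i (by omega) (by omega), hδQ0 (i+1) (by omega) (by omega),
          show 2*q+2-i = (2*q+2-(i+1))+1 by omega, abs_sub_comm]
        exact hsp' (2*q+2-(i+1)) (by omega)
      · rw [hδQ0 (2*q+1) (by omega) (by omega), show 2*q+2-(2*q+1) = 1 by omega, hp1,
          show 2*q+1+1 = 2*q+2 by omega, hδ2q2]
        exact habs _ _ (by omega)
      · rw [hδ2q2, show 2*q+2+1 = 2*q+3 by omega, hδQ2 (2*q+3) (by omega) (by omega),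
          show 2*q+3-2*q-2 = 1 by omega, hp1]
        exact habs _ _ (by omega)
      · rw [hδQ2 i (by omega) (by omega), hδQ2 (i+1) (by omega) (by omega),
          show i+1-2*q-2 = (i-2*q-2)+1 by omega]
        exact hsp' (i-2*q-2) (by omega)
      · rw [hδQ2 (3*q+1) (by omega) (by omega), show 3*q+1-2*q-2 = q-1 by omega,
          show 3*q+1+1 = 3*q+2 by omega, hδ3q2]
        have h := hsp' (q-1) (by omega)
        rwa [show q-1+1 = q by omega] at h
      · rw [hδ3q2, hpq, show 3*q+2+1 = 3*q+3 by omega, hδtop (3*q+3) (by omega)]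
        exact habs _ _ (by omega)
      · rw [hδtop (3*q+3) (by omega), hδtop (3*q+3+1) (by omega)]
        exact habs _ _ (by omega)
    refine ⟨δn, hlenL, hlenw, hndL, hcomplL, ?_, ?_, hδ0 0 (by omega), hδ0 1 (by omega),
      ?_, ?_, hheadL, hlastL⟩
    · intro i hi
      exact hTnew i (by rw [hlen36] at hi; omega)
    · intro i hi
      exact hskew i (by rw [hlen36] at hi; omega)
    · rw [show 3^(m+3)-3 = 3*q+3 by omega]
      exact hδtop _ (by omega)
    · rw [show 3^(m+3)-2 = 3*q+4 by omega]
      exact hδtop _ (by omega)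
lemma getD_map (A : List (List (ZMod 3))) (g : List (ZMod 3) → List (ZMod 3)) (j : ℕ)
    (h : j < A.length) : (A.map g).getD j [] = g (A.getD j []) := by
  rw [List.getD_eq_getElem _ _ (by simpa using h), List.getElem_map,
    List.getD_eq_getElem _ _ h]

lemma mod_succ_eq {N i : ℕ} (h : i % N + 1 < N) : (i+1) % N = i % N + 1 := by
  conv_lhs => rw [← Nat.div_add_mod i N]
  rw [add_assoc, Nat.mul_add_mod]
  exact Nat.mod_eq_of_lt h

lemma mod_succ_zero {N i : ℕ} (hN : 0 < N) (h : i % N = N - 1) : (i+1) % N = 0 := by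
  conv_lhs => rw [← Nat.div_add_mod i N]
  rw [add_assoc, h, show N - 1 + 1 = N by omega, Nat.mul_add_mod, Nat.mod_self]

theorem stmt17 : ∀ n : ℕ, 3 ≤ n →
    (∀ c ∈ t9B n, c.length = n) ∧ (t9B n).length = 3 ^ n ∧
    (∀ c : List (ZMod 3), c.length = n → c ∈ t9B n) ∧
    ∃ δ : ℕ → ℕ, CyclicGrayWith (t9B n) δ ∧ SkewCyc (t9B n).length δ 1 := by
  intro n hn
  obtain ⟨k, rfl⟩ : ∃ k, n = k + 1 := ⟨n - 1, by omega⟩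
  have hk : 2 ≤ k := by omega
  obtain ⟨p, hAlen, hlen, hnd, hcompl, hT, hsp, hp0, hp1, hpl1, hpl2, hhead, hlast⟩ := goodA k hk
  set A := t8A k with hAdef
  set N := 3^k with hNdef
  have h9 : 9 ≤ N := by
    calc (9:ℕ) = 3^2 := rfl
    _ ≤ 3^k := Nat.pow_le_pow_right (by omega) hk
  have hB : t9B (k+1) = A.map (· ++ [0]) ++ A.map (fun c => addE1 c ++ [1]) ++
      A.map (fun c => addE1 (addE1 c) ++ [2]) := rfl
  have hAne : A ≠ [] := by
    intro h; rw [h] at hAlen; simp at hAlen; omega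
  have hBlen : (t9B (k+1)).length = 3^(k+1) := by
    rw [hB]
    simp only [List.length_append, List.length_map, hAlen]
    rw [pow_succ, hNdef]; ring
  have hlenw : ∀ w ∈ t9B (k+1), w.length = k+1 := by
    intro w hw
    rw [hB] at hw
    simp only [List.mem_append, List.mem_map] at hw
    rcases hw with (⟨u,hu,rfl⟩|⟨u,hu,rfl⟩)|⟨u,hu,rfl⟩ <;>
      simp [hlen u hu, addE1_length]
  have hcomplB : ∀ w : List (ZMod 3), w.length = k+1 → w ∈ t9B (k+1) := by
    intro w hw
    have hne : w ≠ [] := by intro h; rw [h] at hw; simp at hw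
    have hsplitw : w.dropLast ++ [w.getLast hne] = w := List.dropLast_append_getLast hne
    set u := w.dropLast with hu
    set x := w.getLast hne with hx
    have hul : u.length = k := by
      rw [hu, List.length_dropLast, hw]
      omega
    rw [hB]

    simp only [List.mem_append, List.mem_map]
    have hx3 : x = 0 ∨ x = 1 ∨ x = 2 := by
      have : ∀ y : ZMod 3, y = 0 ∨ y = 1 ∨ y = 2 := by decide
      exact this x
    rcases hx3 with h|h|h
    · exact Or.inl (Or.inl ⟨u, hcompl u hul, by rw [← h]; exact hsplitw⟩)
    · refine Or.inl (Or.inr ⟨addE1 (addE1 u),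
        hcompl _ (by rw [addE1_length, addE1_length, hul]), ?_⟩)
      rw [addE1_addE1_addE1, ← h]; exact hsplitw
    · refine Or.inr ⟨addE1 u, hcompl _ (by rw [addE1_length, hul]), ?_⟩
      rw [addE1_addE1_addE1, ← h]; exact hsplitw
  have hndB : (t9B (k+1)).Nodup := by
    rw [hB]
    have hinj0 : Function.Injective (fun l : List (ZMod 3) => l ++ [(0 : ZMod 3)]) :=
      fun a b h => List.append_cancel_right h
    have hinj1 : Function.Injective (fun c : List (ZMod 3) => addE1 c ++ [(1 : ZMod 3)]) := by
      intro a b h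
      exact addE1_injective (List.append_cancel_right h)
    have hinj2 : Function.Injective
        (fun c : List (ZMod 3) => addE1 (addE1 c) ++ [(2 : ZMod 3)]) := by
      intro a b h
      exact addE1_injective (addE1_injective (List.append_cancel_right h))
    have hdisj : ∀ (f g : List (ZMod 3) → List (ZMod 3)) (x y : ZMod 3), x ≠ y →
        (∀ u : List (ZMod 3), (f u).length = u.length) →
        (∀ u : List (ZMod 3), (g u).length = u.length) →
        (A.map (fun c => f c ++ [x])).Disjoint (A.map (fun c => g c ++ [y])) := by
      intro f g x y hxy hf hg w h1 h2
      simp only [List.mem_map] at h1 h2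
      obtain ⟨u, hu, rfl⟩ := h1
      obtain ⟨v, hv, heq⟩ := h2
      have hlen' : (g v).length = (f u).length := by
        rw [hf, hg, hlen u hu, hlen v hv]
      have := List.append_inj_right heq hlen'
      simp only [List.cons.injEq] at this
      exact hxy (this.1.symm)
    refine ((hnd.map hinj0).append (hnd.map hinj1) ?_).append (hnd.map hinj2) ?_
    · exact hdisj id addE1 0 1 (by decide) (fun u => rfl) (fun u => addE1_length u)
    · intro w hw1 hw2
      rcases List.mem_append.1 hw1 with h | h
      · exact hdisj id (fun c => addE1 (addE1 c)) 0 2 (by decide) (fun u => rfl)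
          (fun u => by simp [addE1_length]) h hw2
      · exact hdisj addE1 (fun c => addE1 (addE1 c)) 1 2 (by decide)
          (fun u => addE1_length u) (fun u => by simp [addE1_length]) h hw2
  refine ⟨hlenw, hBlen, hcomplB, ?_⟩
  have h3N : 3^(k+1) = 3*N := by rw [pow_succ, hNdef]; ring
  have hl0 : (A.map (· ++ [(0 : ZMod 3)])).length = N := by
    rw [List.length_map, hAlen]
  have hl1 : (A.map (fun c => addE1 c ++ [(1 : ZMod 3)])).length = N := by
    rw [List.length_map, hAlen]
  have hl01 : (A.map (· ++ [(0 : ZMod 3)]) ++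
      A.map (fun c => addE1 c ++ [(1 : ZMod 3)])).length = 2*N := by
    rw [List.length_append, hl0, hl1]; ring
  have hB0 : ∀ j, j < N → (t9B (k+1)).getD j [] = A.getD j [] ++ [0] := by
    intro j hj
    rw [hB, List.getD_append _ _ _ _ (by rw [hl01]; omega),
      List.getD_append _ _ _ _ (by rw [hl0]; omega), getD_map _ _ _ (by omega)]
  have hB1 : ∀ j, j < N → (t9B (k+1)).getD (N+j) [] = addE1 (A.getD j []) ++ [1] := by
    intro j hj
    rw [hB, List.getD_append _ _ _ _ (by rw [hl01]; omega),
      List.getD_append_right _ _ _ _ (by rw [hl0]; omega)]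
    have e : N + j - (A.map (· ++ [(0 : ZMod 3)])).length = j := by rw [hl0]; omega
    rw [e, getD_map _ _ _ (by omega)]
  have hB2 : ∀ j, j < N →
      (t9B (k+1)).getD (2*N+j) [] = addE1 (addE1 (A.getD j [])) ++ [2] := by
    intro j hj
    rw [hB, List.getD_append_right _ _ _ _ (by rw [hl01]; omega)]
    have e : 2*N + j - (A.map (· ++ [(0 : ZMod 3)]) ++
        A.map (fun c => addE1 c ++ [(1 : ZMod 3)])).length = j := by rw [hl01]; omega
    rw [e, getD_map _ _ _ (by omega)]
  have hA0 : A.getD 0 [] = List.replicate k 0 := by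
    rw [getD_zero_headI A hAne, hhead]
  have hAlast : A.getD (N-1) [] = 1 :: List.replicate (k-1) 0 := by
    rw [← hlast, List.getLastD_eq_getLast?, List.getLast?_eq_getLast hAne]
    show _ = A.getLast hAne
    rw [List.getLast_eq_getElem, List.getD_eq_getElem _ _ (by omega)]
    congr 1
    omega
  have e0 : addE1 (List.replicate k 0) = 1 :: List.replicate (k-1) 0 := by
    obtain ⟨j, hj⟩ : ∃ j, k = j + 1 := ⟨k - 1, by omega⟩
    rw [hj, List.replicate_succ]
    simp only [addE1, zero_add]
    congr 1
  have e1 : addE1 (1 :: List.replicate (k-1) 0) = 2 :: List.replicate (k-1) 0 := by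
    simp only [addE1]
    have : (1 : ZMod 3) + 1 = 2 := by decide
    rw [this]
  have e2 : addE1 (2 :: List.replicate (k-1) 0) = List.replicate k 0 := by
    conv_rhs => rw [show k = (k-1) + 1 by omega, List.replicate_succ]
    simp only [addE1]
    have : (2 : ZMod 3) + 1 = 0 := by decide
    rw [this]
  have hT' : ∀ j, j + 1 < N → TransAt (A.getD j []) (A.getD (j+1) []) (p j) := by
    intro j hj; exact hT j (by omega)
  set δB : ℕ → ℕ := fun i => if i % N = N - 1 then k+1 else p (i % N) with hδB
  have hδBv : ∀ i, i % N ≠ N - 1 → δB i = p (i % N) := by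
    intro i h; simp only [hδB]; rw [if_neg h]
  have hδBn : ∀ i, i % N = N - 1 → δB i = k+1 := by
    intro i h; simp only [hδB]; rw [if_pos h]
  have hmodN : ∀ j, j < N → (N + j) % N = j := by
    intro j hj; rw [Nat.add_mod_left]; exact Nat.mod_eq_of_lt hj
  have hmod2N : ∀ j, j < N → (2*N + j) % N = j := by
    intro j hj; rw [show 2*N+j = N+(N+j) by ring, Nat.add_mod_left, Nat.add_mod_left]
    exact Nat.mod_eq_of_lt hj
  refine ⟨δB, ⟨hndB, ?_⟩, ?_⟩
  · -- cyclic Gray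
    intro i hi
    rw [hBlen, h3N] at hi
    rw [hBlen, h3N]
    rcases (by omega : (i ≤ N-2) ∨ i = N-1 ∨ (N ≤ i ∧ i ≤ 2*N-2) ∨ i = 2*N-1 ∨
        (2*N ≤ i ∧ i ≤ 3*N-2) ∨ i = 3*N-1) with
      h | rfl | ⟨ha,hb⟩ | rfl | ⟨ha,hb⟩ | rfl
    · rw [show (i+1) % (3*N) = i+1 from Nat.mod_eq_of_lt (by omega),
        hB0 i (by omega), hB0 (i+1) (by omega),
        hδBv i (by rw [Nat.mod_eq_of_lt (show i < N by omega)]; omega),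
        Nat.mod_eq_of_lt (show i < N by omega)]
      exact transAt_append (hT' i (by omega)) 0
    · rw [show (N-1+1) % (3*N) = N+0 by
          rw [show N-1+1 = N+0 by omega]; exact Nat.mod_eq_of_lt (by omega),
        hB0 (N-1) (by omega), hB1 0 (by omega),
        hδBn (N-1) (Nat.mod_eq_of_lt (by omega)), hAlast, hA0, e0]
      have h := transAt_last (1 :: List.replicate (k-1) 0)
        (show (1:ZMod 3) = 0 + 1 ∨ (1:ZMod 3) = 0 - 1 by decide)
      rwa [show (1 :: List.replicate (k-1) (0 : ZMod 3)).length = k by simp; omega] at h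
    · obtain ⟨j, rfl⟩ : ∃ j, i = N + j := ⟨i - N, by omega⟩
      rw [show (N+j+1) % (3*N) = N+(j+1) by
          rw [show N+j+1 = N+(j+1) by omega]; exact Nat.mod_eq_of_lt (by omega),
        hB1 j (by omega), hB1 (j+1) (by omega),
        hδBv (N+j) (by rw [hmodN j (by omega)]; omega), hmodN j (by omega)]
      exact transAt_append (transAt_addE1 (hT' j (by omega))) 1
    · rw [show (2*N-1+1) % (3*N) = 2*N+0 by
          rw [show 2*N-1+1 = 2*N+0 by omega]; exact Nat.mod_eq_of_lt (by omega),
        show 2*N-1 = N+(N-1) by omega, hB1 (N-1) (by omega), hB2 0 (by omega),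
        hδBn (N+(N-1)) (hmodN (N-1) (by omega)), hAlast, hA0, e0, e1]
      have h := transAt_last (2 :: List.replicate (k-1) 0)
        (show (2:ZMod 3) = 1 + 1 ∨ (2:ZMod 3) = 1 - 1 by decide)
      rwa [show (2 :: List.replicate (k-1) (0 : ZMod 3)).length = k by simp; omega] at h
    · obtain ⟨j, rfl⟩ : ∃ j, i = 2*N + j := ⟨i - 2*N, by omega⟩
      rw [show (2*N+j+1) % (3*N) = 2*N+(j+1) by
          rw [show 2*N+j+1 = 2*N+(j+1) by omega]; exact Nat.mod_eq_of_lt (by omega),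
        hB2 j (by omega), hB2 (j+1) (by omega),
        hδBv (2*N+j) (by rw [hmod2N j (by omega)]; omega), hmod2N j (by omega)]
      exact transAt_append (transAt_addE1 (transAt_addE1 (hT' j (by omega)))) 2
    · rw [show (3*N-1+1) % (3*N) = 0 by
          rw [show 3*N-1+1 = 3*N by omega]; exact Nat.mod_self _,
        show 3*N-1 = 2*N+(N-1) by omega, hB2 (N-1) (by omega), hB0 0 (by omega),
        hδBn (2*N+(N-1)) (hmod2N (N-1) (by omega)), hAlast, hA0, e1, e2]
      have h := transAt_last (List.replicate k 0)
        (show (0:ZMod 3) = 2 + 1 ∨ (0:ZMod 3) = 2 - 1 by decide)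
      rwa [show (List.replicate k (0 : ZMod 3)).length = k by simp] at h
  · -- skew cyclic
    intro i hi
    rw [hBlen, h3N] at hi ⊢
    have habs : ∀ a b : ℕ, (a = b ∨ a + 1 = b ∨ b + 1 = a) → |(a:ℤ) - (b:ℤ)| ≤ 1 := by
      intro a b h; rw [abs_le]; omega
    have hsp' : ∀ j, j + 2 < N → |(p j : ℤ) - (p (j+1) : ℤ)| ≤ 1 := by
      intro j hj; exact hsp j (by omega)
    have hpN2 : p (N-2) = k := hpl2
    have hlastmod : (3*N-1) % N = N-1 := by
      rw [show 3*N-1 = N+(N+(N-1)) by omega, Nat.add_mod_left, Nat.add_mod_left]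
      exact Nat.mod_eq_of_lt (by omega)
    have hmodlt : i % N < N := Nat.mod_lt _ (by omega)
    rcases (by omega : i % N ≤ N - 3 ∨ i % N = N-2 ∨ i % N = N-1) with h | h | h
    · have hne : i ≠ 3*N - 1 := by
        intro he; rw [he, hlastmod] at h; omega
      have hs : (i+1) % N = i % N + 1 := mod_succ_eq (by omega)
      rw [show (i+1) % (3*N) = i+1 from Nat.mod_eq_of_lt (by omega),
        hδBv i (by omega), hδBv (i+1) (by rw [hs]; omega), hs]
      exact hsp' (i % N) (by omega)
    · have hne : i ≠ 3*N - 1 := by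
        intro he; rw [he, hlastmod] at h; omega
      have hs : (i+1) % N = N - 1 := by rw [mod_succ_eq (by omega), h]; omega
      rw [show (i+1) % (3*N) = i+1 from Nat.mod_eq_of_lt (by omega),
        hδBv i (by omega), hδBn (i+1) hs, h, hpN2]
      exact habs _ _ (by omega)
    · rw [hδBn i h]
      rcases (by omega : i + 1 < 3*N ∨ i = 3*N-1) with he | rfl
      · rw [show (i+1) % (3*N) = i+1 from Nat.mod_eq_of_lt he,
          hδBv (i+1) (by rw [mod_succ_zero (by omega) h]; omega),
          mod_succ_zero (by omega) h, hp0]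
        exact habs _ _ (by omega)
      · rw [show (3*N-1+1) % (3*N) = 0 by
            rw [show 3*N-1+1 = 3*N by omega]; exact Nat.mod_self _,
          hδBv 0 (by rw [Nat.zero_mod]; omega), Nat.zero_mod, hp0]
        exact habs _ _ (by omega)
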